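/- Every whirl map is incompressible: if u(x) = Q[f](y(x)) x is a whirl map with Q[f] of class C¹, then det ∇u(x) = 1 for all x. More precisely det∇u = det[I_n + Σ_{ℓ=1}^N Qᵗ∂_ℓQ x ⊗ ∇y_ℓ], and since the vectors p_ℓ = Qᵗ∂_ℓQ x and q_k = ∇y_k satisfy ⟨p_ℓ, q_k⟩ = 0 for all 1 ≤ ℓ, k ≤ N, it follows that det[I_n + Σ_{ℓ=1}^N p_ℓ ⊗ q_ℓ] = 1. -/

import Mathlib

open scoped BigOperators
open Matrix

noncomputable section

/-- Partial derivative `∂g/∂x_j` of a scalar field on `ℝᵐ`. -/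
def pdx {m : ℕ} (g : (Fin m → ℝ) → ℝ) (x : Fin m → ℝ) (j : Fin m) : ℝ :=
  fderiv ℝ g x (Pi.single j 1)

/-- Gradient of a scalar field on `ℝᵐ`. -/
def gradx {m : ℕ} (g : (Fin m → ℝ) → ℝ) (x : Fin m → ℝ) : Fin m → ℝ :=
  fun j => pdx g x j

/-- Gradient matrix `∇u`, with entries `(∇u)_{ij} = ∂u_i/∂x_j`. -/
def gradm {n : ℕ} (u : (Fin n → ℝ) → Fin n → ℝ) (x : Fin n → ℝ) :
    Matrix (Fin n) (Fin n) ℝ :=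
  Matrix.of fun i j => pdx (fun z => u z i) x j

/-- Laplacian of a scalar field. -/
def lapx {m : ℕ} (g : (Fin m → ℝ) → ℝ) (x : Fin m → ℝ) : ℝ :=
  ∑ j, pdx (fun z => pdx g z j) x j

/-- Hessian matrix of a scalar field. -/
def hessx {m : ℕ} (g : (Fin m → ℝ) → ℝ) (x : Fin m → ℝ) : Matrix (Fin m) (Fin m) ℝ :=
  Matrix.of fun i j => pdx (fun z => pdx g z j) x i

/-- Componentwise Laplacian of a vector field. -/
def lapv {n : ℕ} (u : (Fin n → ℝ) → Fin n → ℝ) (x : Fin n → ℝ) : Fin n → ℝ :=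
  fun i => lapx (fun z => u z i) x

/-- Squared Euclidean norm of a vector. -/
def norm2 {m : ℕ} (v : Fin m → ℝ) : ℝ := ∑ i, v i ^ 2

/-- Euclidean norm of a vector. -/
def enr {m : ℕ} (v : Fin m → ℝ) : ℝ := Real.sqrt (norm2 v)

/-- Squared Frobenius norm of a matrix, `|E|² = tr (EᵗE)`. -/
def frob2 {n : ℕ} (M : Matrix (Fin n) (Fin n) ℝ) : ℝ := ∑ i, ∑ j, M i j ^ 2

/-- The 2-plane radial variables `y = (y_1, …, y_N)`, `N = ⌈n/2⌉` (0-indexed):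
`y_ℓ = √(x_{2ℓ}² + x_{2ℓ+1}²)` and, when `n` is odd, `y_{N-1} = x_{n-1}`. -/
def yvar {n : ℕ} (x : Fin n → ℝ) (ℓ : Fin ((n+1)/2)) : ℝ :=
  if h : 2 * (ℓ : ℕ) + 1 < n then
    Real.sqrt (x ⟨2*(ℓ:ℕ), by omega⟩ ^ 2 + x ⟨2*(ℓ:ℕ)+1, h⟩ ^ 2)
  else x ⟨n - 1, by have := ℓ.isLt; omega⟩

/-- The vector of 2-plane radial variables of `x`. -/
def yv {n : ℕ} (x : Fin n → ℝ) : Fin ((n+1)/2) → ℝ := fun ℓ => yvar x ℓ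

/-- Inclusion `Fin (n/2) → Fin ((n+1)/2)`, i.e. `d = ⌊n/2⌋` into `N = ⌈n/2⌉`. -/
def dIdx {n : ℕ} (i : Fin (n/2)) : Fin ((n+1)/2) := ⟨(i:ℕ), by have := i.isLt; omega⟩

/-- Partial derivative `∂_ℓ M` of a matrix field on `ℝᴺ`. -/
def pdM {n N : ℕ} (M : (Fin N → ℝ) → Matrix (Fin n) (Fin n) ℝ)
    (y : Fin N → ℝ) (ℓ : Fin N) : Matrix (Fin n) (Fin n) ℝ :=
  Matrix.of fun i j => pdx (fun z => M z i j) y ℓ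

/-- Second partial derivative `∂²_{ℓk} M` of a matrix field on `ℝᴺ`. -/
def pdM2 {n N : ℕ} (M : (Fin N → ℝ) → Matrix (Fin n) (Fin n) ℝ)
    (y : Fin N → ℝ) (ℓ k : Fin N) : Matrix (Fin n) (Fin n) ℝ :=
  Matrix.of fun i j => pdx (fun z => pdM M z ℓ i j) y k

/-- The block diagonal `SO(n)`-valued matrix field `Q[f]`, with `2×2` rotation blocks
`R[f_ℓ(y)]` (and an extra diagonal `1` when `n` is odd). -/
def Qf {n : ℕ} (f : (Fin ((n+1)/2) → ℝ) → Fin (n/2) → ℝ)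
    (y : Fin ((n+1)/2) → ℝ) : Matrix (Fin n) (Fin n) ℝ :=
  Matrix.of fun i j =>
    if h : (i:ℕ)/2 = (j:ℕ)/2 ∧ (i:ℕ)/2 < n/2 then
      (if (i:ℕ) % 2 = 0 then
        (if (j:ℕ) % 2 = 0 then Real.cos (f y ⟨(i:ℕ)/2, h.2⟩)
         else -Real.sin (f y ⟨(i:ℕ)/2, h.2⟩))
       else
        (if (j:ℕ) % 2 = 0 then Real.sin (f y ⟨(i:ℕ)/2, h.2⟩)
         else Real.cos (f y ⟨(i:ℕ)/2, h.2⟩)))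
    else (if i = j then 1 else 0)

/-- The block diagonal rotation matrix `exp(α𝐇) = diag(R[α], …, R[α])`
(an extra diagonal `1` when `n` is odd). -/
def rotM (n : ℕ) (α : ℝ) : Matrix (Fin n) (Fin n) ℝ :=
  Matrix.of fun i j =>
    if (i:ℕ)/2 = (j:ℕ)/2 ∧ (i:ℕ)/2 < n/2 then
      (if (i:ℕ) % 2 = 0 then
        (if (j:ℕ) % 2 = 0 then Real.cos α else -Real.sin α)
       else
        (if (j:ℕ) % 2 = 0 then Real.sin α else Real.cos α))
    else (if i = j then 1 else 0)

/-- The vector `w^k = (0, …, 0, x_{2k}, x_{2k+1}, 0, …, 0)`. -/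
def wv {n : ℕ} (x : Fin n → ℝ) (k : Fin ((n+1)/2)) : Fin n → ℝ :=
  fun j => if (j:ℕ)/2 = (k:ℕ) then x j else 0

/-- The vector `[w^k]^⊥ = (0, …, 0, -x_{2k+1}, x_{2k}, 0, …, 0)` (zero in the odd last slot). -/
def wperp {n : ℕ} (x : Fin n → ℝ) (k : Fin ((n+1)/2)) : Fin n → ℝ :=
  fun j =>
    if h : (j:ℕ)/2 = (k:ℕ) ∧ 2*(k:ℕ)+1 < n then
      (if (j:ℕ) % 2 = 0 then -x ⟨2*(k:ℕ)+1, h.2⟩ else x ⟨2*(k:ℕ), by omega⟩)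
    else 0

/-- The differential operator
`𝓛[u;A,B] = [∇u]ᵗ[∇u]∇A + A [∇u]ᵗΔu + B [∇u]ᵗu`, where `A, B` are evaluated at
`(|x|, |u|², |∇u|²)` and `∇A` is the spatial gradient of `x ↦ A(|x|,|u(x)|²,|∇u(x)|²)`. -/
def LAB {n : ℕ} (A B : ℝ → ℝ → ℝ → ℝ) (u : (Fin n → ℝ) → Fin n → ℝ)
    (x : Fin n → ℝ) : Fin n → ℝ :=
  ((gradm u x)ᵀ * gradm u x) *ᵥ
      gradx (fun z => A (enr z) (norm2 (u z)) (frob2 (gradm u z))) x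
    + A (enr x) (norm2 (u x)) (frob2 (gradm u x)) • ((gradm u x)ᵀ *ᵥ lapv u x)
    + B (enr x) (norm2 (u x)) (frob2 (gradm u x)) • ((gradm u x)ᵀ *ᵥ u x)

/-- The annulus `𝕏ₙ = {x : a < |x| < b}` in `ℝⁿ`. -/
def Xann (n : ℕ) (a b : ℝ) : Set (Fin n → ℝ) := {x | a < enr x ∧ enr x < b}

/-- The region `𝔸ₙ = {y : a < ‖y‖ < b}` (with the 2-plane radial coordinates positive). -/
def Ann (n : ℕ) (a b : ℝ) : Set (Fin ((n+1)/2) → ℝ) :=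
  {y | a < enr y ∧ enr y < b ∧ ∀ ℓ : Fin ((n+1)/2), 2*(ℓ:ℕ)+1 < n → 0 < y ℓ}

/-- `𝒥(y) = y_1 ⋯ y_d`. -/
def Jac (n : ℕ) (y : Fin ((n+1)/2) → ℝ) : ℝ :=
  ∏ ℓ : Fin ((n+1)/2), if 2*(ℓ:ℕ)+1 < n then y ℓ else 1

/-- The argument `ξ = n + Σ_j y_j² |∇f_j|²`. -/
def xiArg (n : ℕ) (f : (Fin ((n+1)/2) → ℝ) → Fin (n/2) → ℝ)
    (y : Fin ((n+1)/2) → ℝ) : ℝ :=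
  (n : ℝ) + ∑ j : Fin (n/2), (y (dIdx j))^2 * norm2 (gradx (fun z => f z j) y)

/-- The coefficients `𝒜_i(y,∇f) = y_i² A(z, z², n + Σ_j y_j²|∇f_j|²) 𝒥(y)`, `z = ‖y‖`. -/
def coefA (n : ℕ) (A : ℝ → ℝ → ℝ → ℝ) (f : (Fin ((n+1)/2) → ℝ) → Fin (n/2) → ℝ)
    (i : Fin (n/2)) (y : Fin ((n+1)/2) → ℝ) : ℝ :=
  (y (dIdx i))^2 * A (enr y) ((enr y)^2) (xiArg n f y) * Jac n y

/-- `div [𝒜_i(y,∇f) ∇f_i]`, divergence taken in the `y` variables. -/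
def divA (n : ℕ) (A : ℝ → ℝ → ℝ → ℝ) (f : (Fin ((n+1)/2) → ℝ) → Fin (n/2) → ℝ)
    (i : Fin (n/2)) (y : Fin ((n+1)/2) → ℝ) : ℝ :=
  ∑ k, pdx (fun z => coefA n A f i z * pdx (fun w => f w i) z k) y k

/-- The curl of a vector field, `[curl U]_{ij} = ∂_j U_i − ∂_i U_j`. -/
def curlm {n : ℕ} (U : (Fin n → ℝ) → Fin n → ℝ) (x : Fin n → ℝ) :
    Matrix (Fin n) (Fin n) ℝ :=
  Matrix.of fun i j => pdx (fun z => U z i) x j - pdx (fun z => U z j) x i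

end


section Aux
open Polynomial

noncomputable section

lemma aux_sum_two {n : ℕ} (F : Fin n → ℝ) (a b : Fin n) (hab : a ≠ b)
    (h0 : ∀ m, m ≠ a → m ≠ b → F m = 0) : ∑ m, F m = F a + F b := by
  rw [← Finset.sum_pair hab]
  exact (Finset.sum_subset (Finset.subset_univ _) (fun m _ hm => by
    simp only [Finset.mem_insert, Finset.mem_singleton, not_or] at hm
    exact h0 m hm.1 hm.2)).symm

lemma aux_mul_vecMulVec {n : ℕ} (M : Matrix (Fin n) (Fin n) ℝ) (a b : Fin n → ℝ) :
    M * vecMulVec a b = vecMulVec (M *ᵥ a) b := by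
  ext i j
  simp [Matrix.mul_apply, vecMulVec_apply, mulVec, dotProduct, Finset.sum_mul, mul_assoc]

lemma aux_det_one_add_sq_zero {n : ℕ} (M : Matrix (Fin n) (Fin n) ℝ)
    (h : M * M = 0) : (1 + M).det = 1 := by
  have hnil : IsNilpotent M := ⟨2, by rw [pow_two]; exact h⟩
  have hu := Matrix.isUnit_charpolyRev_of_isNilpotent hnil
  rw [Polynomial.isUnit_iff] at hu
  obtain ⟨r, -, hr⟩ := hu
  have h0 : eval 0 (Matrix.charpolyRev M) = 1 := Matrix.eval_charpolyRev
  rw [← hr, eval_C] at h0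
  subst h0
  have hC : Matrix.charpolyRev M = 1 := by rw [← hr, Polynomial.C_1]
  have := congrArg (eval (-1)) hC
  rw [Matrix.charpolyRev, ← coe_evalRingHom, RingHom.map_det] at this
  rw [show (evalRingHom (-1 : ℝ)) 1 = 1 from map_one _] at this
  rw [show (1 : Matrix (Fin n) (Fin n) ℝ) + M
      = ((evalRingHom (-1 : ℝ)).mapMatrix (1 - (X : ℝ[X]) • M.map C)) from ?_, this]
  ext i j
  rcases eq_or_ne i j with rfl | hij
  · simp [Matrix.one_apply]
  · simp [Matrix.one_apply, hij]

/-- the gradient vector of `yvar · ℓ`. -/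
def dyv {n : ℕ} (x : Fin n → ℝ) (ℓ : Fin ((n+1)/2)) (j : Fin n) : ℝ :=
  if 2*(ℓ:ℕ)+1 < n then (if (j:ℕ)/2 = (ℓ:ℕ) then x j / yvar x ℓ else 0)
  else (if (j:ℕ) = n-1 then 1 else 0)

lemma aux_clm_apply {m : ℕ} (L : (Fin m → ℝ) →L[ℝ] ℝ) (w : Fin m → ℝ) :
    L w = ∑ ℓ, w ℓ * L (Pi.single ℓ 1) := by
  have hw : w = ∑ ℓ, w ℓ • (Pi.single ℓ (1:ℝ) : Fin m → ℝ) := by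
    funext j
    rw [Finset.sum_apply]
    simp [Pi.single_apply]
  conv_lhs => rw [hw]
  rw [map_sum]
  simp [smul_eq_mul]

lemma aux_yvar_hasFDerivAt {n : ℕ} (x : Fin n → ℝ) (ℓ : Fin ((n+1)/2))
    (hpos : 2*(ℓ:ℕ)+1 < n → 0 < yvar x ℓ) :
    ∃ L : (Fin n → ℝ) →L[ℝ] ℝ, HasFDerivAt (fun z => yvar z ℓ) L x ∧
      ∀ j, L (Pi.single j 1) = dyv x ℓ j := by
  by_cases h : 2*(ℓ:ℕ)+1 < n
  · set a : Fin n := ⟨2*(ℓ:ℕ), by omega⟩ with ha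
    set b : Fin n := ⟨2*(ℓ:ℕ)+1, h⟩ with hb
    have hy : ∀ z : Fin n → ℝ, yvar z ℓ = Real.sqrt (z a ^ 2 + z b ^ 2) := by
      intro z; rw [yvar, dif_pos h]
    have hs : (0:ℝ) < x a ^ 2 + x b ^ 2 := by
      have := hpos h; rw [hy x] at this; exact Real.sqrt_pos.mp this
    have hG : HasFDerivAt (fun z : Fin n → ℝ => z a ^ 2 + z b ^ 2)
        ((2 * x a) • (ContinuousLinearMap.proj a : (Fin n → ℝ) →L[ℝ] ℝ)
          + (2 * x b) • (ContinuousLinearMap.proj b : (Fin n → ℝ) →L[ℝ] ℝ)) x := by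
      have h1 : HasFDerivAt (fun z : Fin n → ℝ => z a)
          (ContinuousLinearMap.proj a : (Fin n → ℝ) →L[ℝ] ℝ) x := by
        exact (ContinuousLinearMap.proj a : (Fin n → ℝ) →L[ℝ] ℝ).hasFDerivAt (x := x)
      have h2 : HasFDerivAt (fun z : Fin n → ℝ => z b)
          (ContinuousLinearMap.proj b : (Fin n → ℝ) →L[ℝ] ℝ) x := by
        exact (ContinuousLinearMap.proj b : (Fin n → ℝ) →L[ℝ] ℝ).hasFDerivAt (x := x)
      have hsum := (h1.mul h1).add (h2.mul h2)
      simp only [sq]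
      refine hsum.congr_fderiv ?_
      refine ContinuousLinearMap.ext fun v => ?_
      simp only [ContinuousLinearMap.add_apply, ContinuousLinearMap.smul_apply,
        ContinuousLinearMap.proj_apply, smul_eq_mul]
      ring
    have hsqrt : HasDerivAt Real.sqrt (1 / (2 * Real.sqrt (x a ^ 2 + x b ^ 2)))
        (x a ^ 2 + x b ^ 2) := Real.hasDerivAt_sqrt (ne_of_gt hs)
    have htot := hsqrt.comp_hasFDerivAt x hG
    refine ⟨(1 / (2 * Real.sqrt (x a ^ 2 + x b ^ 2))) •
        ((2 * x a) • (ContinuousLinearMap.proj a : (Fin n → ℝ) →L[ℝ] ℝ)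
          + (2 * x b) • (ContinuousLinearMap.proj b : (Fin n → ℝ) →L[ℝ] ℝ)), ?_, ?_⟩
    · exact htot.congr_of_eventuallyEq (Filter.Eventually.of_forall fun z => (hy z))
    · intro j
      have hsq : Real.sqrt (x a ^ 2 + x b ^ 2) ≠ 0 :=
        ne_of_gt (Real.sqrt_pos.mpr hs)
      have hab : a ≠ b := by
        simp only [ha, hb, Fin.ext_iff, ne_eq]; omega
      simp only [ContinuousLinearMap.smul_apply, ContinuousLinearMap.add_apply,
        ContinuousLinearMap.proj_apply, smul_eq_mul, dyv, if_pos h]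
      rw [hy x]
      by_cases hja : j = a
      · subst hja
        rw [Pi.single_eq_same, Pi.single_eq_of_ne (Ne.symm hab)]
        rw [if_pos (by simp only [ha]; omega)]
        field_simp
        ring
      · by_cases hjb : j = b
        · subst hjb
          rw [Pi.single_eq_same, Pi.single_eq_of_ne hab]
          rw [if_pos (by simp only [hb]; omega)]
          field_simp
          ring
        · rw [Pi.single_eq_of_ne (fun hh => hja hh.symm),
            Pi.single_eq_of_ne (fun hh => hjb hh.symm)]
          rw [if_neg (by
            simp only [Fin.ext_iff, ha] at hja
            simp only [Fin.ext_iff, hb] at hjb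
            omega)]
          ring
  · have hn1 : n - 1 < n := by have := ℓ.isLt; omega
    set c : Fin n := ⟨n - 1, hn1⟩ with hc
    have hy : ∀ z : Fin n → ℝ, yvar z ℓ = z c := by
      intro z; rw [yvar, dif_neg h]
    refine ⟨(ContinuousLinearMap.proj c : (Fin n → ℝ) →L[ℝ] ℝ), ?_, ?_⟩
    · have h1 : HasFDerivAt (fun z : Fin n → ℝ => z c)
          (ContinuousLinearMap.proj c : (Fin n → ℝ) →L[ℝ] ℝ) x := by
        exact (ContinuousLinearMap.proj c : (Fin n → ℝ) →L[ℝ] ℝ).hasFDerivAt (x := x)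
      exact h1.congr_of_eventuallyEq (Filter.Eventually.of_forall fun z => (hy z))
    · intro j
      simp only [ContinuousLinearMap.proj_apply, dyv, if_neg h]
      by_cases hjc : j = c
      · subst hjc
        rw [Pi.single_eq_same, if_pos (by simp [hc])]
      · rw [Pi.single_eq_of_ne (fun hh => hjc hh.symm),
          if_neg (by simp only [Fin.ext_iff, hc] at hjc; omega)]

lemma aux_chain {n : ℕ} (x : Fin n → ℝ)
    (hx : ∀ ℓ : Fin ((n+1)/2), 2*(ℓ:ℕ)+1 < n → 0 < yvar x ℓ)
    (E : (Fin ((n+1)/2) → ℝ) → ℝ) (hE : DifferentiableAt ℝ E (yv x)) :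
    DifferentiableAt ℝ (fun z => E (yv z)) x ∧
    ∀ j, pdx (fun z => E (yv z)) x j = ∑ ℓ, pdx E (yv x) ℓ * dyv x ℓ j := by
  choose L hL hLv using fun ℓ => aux_yvar_hasFDerivAt x ℓ (hx ℓ)
  have hyv : HasFDerivAt (fun z => yv z) (ContinuousLinearMap.pi L) x := by
    apply hasFDerivAt_pi.mpr
    intro ℓ
    exact hL ℓ
  have htot : HasFDerivAt (fun z => E (yv z))
      ((fderiv ℝ E (yv x)).comp (ContinuousLinearMap.pi L)) x :=
    (hE.hasFDerivAt).comp x hyv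
  refine ⟨htot.differentiableAt, fun j => ?_⟩
  have hval : pdx (fun z => E (yv z)) x j
      = fderiv ℝ E (yv x) (fun ℓ => L ℓ (Pi.single j 1)) := by
    rw [pdx, htot.fderiv]; rfl
  rw [hval, aux_clm_apply]
  refine Finset.sum_congr rfl fun ℓ _ => ?_
  rw [hLv ℓ j, mul_comm]
  rfl

lemma aux_pdx_const {m : ℕ} (c : ℝ) (y : Fin m → ℝ) (ℓ : Fin m) :
    pdx (fun _ => c) y ℓ = 0 := by
  rw [pdx, fderiv_fun_const]
  simp

lemma aux_pdx_congr {m : ℕ} {g h : (Fin m → ℝ) → ℝ} (hgh : ∀ z, g z = h z)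
    (y : Fin m → ℝ) (ℓ : Fin m) : pdx g y ℓ = pdx h y ℓ := by
  rw [pdx, pdx, funext hgh]

lemma aux_pdx_mul {m : ℕ} (g h : (Fin m → ℝ) → ℝ) (y : Fin m → ℝ)
    (hg : DifferentiableAt ℝ g y) (hh : DifferentiableAt ℝ h y) (ℓ : Fin m) :
    pdx (fun z => g z * h z) y ℓ = pdx g y ℓ * h y + g y * pdx h y ℓ := by
  rw [pdx, fderiv_fun_mul hg hh]
  simp [pdx]
  ring

lemma aux_pdx_sum {m k : ℕ} (g : Fin k → (Fin m → ℝ) → ℝ) (y : Fin m → ℝ)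
    (hg : ∀ i, DifferentiableAt ℝ (g i) y) (ℓ : Fin m) :
    pdx (fun z => ∑ i, g i z) y ℓ = ∑ i, pdx (g i) y ℓ := by
  rw [pdx, fderiv_fun_sum (fun i _ => hg i)]
  simp [pdx]

lemma aux_pdx_coord {m : ℕ} (a : Fin m) (x : Fin m → ℝ) (j : Fin m) :
    pdx (fun z => z a) x j = if a = j then 1 else 0 := by
  have h1 : HasFDerivAt (fun z : Fin m → ℝ => z a)
      (ContinuousLinearMap.proj a : (Fin m → ℝ) →L[ℝ] ℝ) x := by
    exact (ContinuousLinearMap.proj a : (Fin m → ℝ) →L[ℝ] ℝ).hasFDerivAt (x := x)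
  rw [pdx, h1.fderiv]
  simp [Pi.single_apply]

lemma aux_Q_offblock {n : ℕ} (f : (Fin ((n+1)/2) → ℝ) → Fin (n/2) → ℝ)
    (y : Fin ((n+1)/2) → ℝ) {i m : Fin n}
    (h : ¬((i:ℕ)/2 = (m:ℕ)/2 ∧ (i:ℕ)/2 < n/2)) :
    Qf f y i m = if i = m then 1 else 0 := by
  rw [Qf]
  exact dif_neg h

lemma aux_Q_diff {n : ℕ} (f : (Fin ((n+1)/2) → ℝ) → Fin (n/2) → ℝ)
    (hf : ∀ k, Differentiable ℝ (fun y => f y k)) (y : Fin ((n+1)/2) → ℝ)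
    (i m : Fin n) : DifferentiableAt ℝ (fun w => Qf f w i m) y := by
  by_cases h : (i:ℕ)/2 = (m:ℕ)/2 ∧ (i:ℕ)/2 < n/2
  · simp only [Qf, Matrix.of_apply, dif_pos h]
    by_cases hi : (i:ℕ) % 2 = 0 <;> by_cases hm : (m:ℕ) % 2 = 0 <;>
      simp only [if_pos, if_neg, hi, hm, if_true, if_false]
    · exact (Real.differentiable_cos.comp (hf _)).differentiableAt
    · exact ((Real.differentiable_sin.comp (hf _)).neg).differentiableAt
    · exact (Real.differentiable_sin.comp (hf _)).differentiableAt
    · exact (Real.differentiable_cos.comp (hf _)).differentiableAt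
  · simp only [Qf, Matrix.of_apply, dif_neg h]
    exact differentiableAt_const _

lemma aux_Q_zero {n : ℕ} (f : (Fin ((n+1)/2) → ℝ) → Fin (n/2) → ℝ)
    (y : Fin ((n+1)/2) → ℝ) {i m : Fin n}
    (h : (i:ℕ)/2 ≠ (m:ℕ)/2) : Qf f y i m = 0 := by
  simp only [Qf, Matrix.of_apply]
  rw [dif_neg (fun hc => h hc.1), if_neg]
  intro hc; exact h (by rw [hc])

lemma aux_QtQ {n : ℕ} (f : (Fin ((n+1)/2) → ℝ) → Fin (n/2) → ℝ)
    (y : Fin ((n+1)/2) → ℝ) : (Qf f y)ᵀ * Qf f y = 1 := by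
  ext i j
  rw [Matrix.mul_apply]
  simp only [Matrix.transpose_apply]
  by_cases hij : (i:ℕ)/2 = (j:ℕ)/2
  · by_cases hk : (i:ℕ)/2 < n/2
    · have h2k : 2*((i:ℕ)/2)+1 < n := by omega
      set a : Fin n := ⟨2*((i:ℕ)/2), by omega⟩ with ha
      set b : Fin n := ⟨2*((i:ℕ)/2)+1, h2k⟩ with hb
      have hab : a ≠ b := by simp only [ha, hb, Fin.ext_iff, ne_eq]; omega
      rw [aux_sum_two _ a b hab (fun m hma hmb => by
        have hm : (m:ℕ)/2 ≠ (i:ℕ)/2 := by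
          have hma' : (m:ℕ) ≠ 2*((i:ℕ)/2) := fun hc => hma (Fin.ext hc)
          have hmb' : (m:ℕ) ≠ 2*((i:ℕ)/2)+1 := fun hc => hmb (Fin.ext hc)
          omega
        rw [aux_Q_zero f y hm, zero_mul])]
      have hca : ((a:ℕ)/2 = (i:ℕ)/2 ∧ (a:ℕ)/2 < n/2) := by simp only [ha]; omega
      have hcb : ((b:ℕ)/2 = (i:ℕ)/2 ∧ (b:ℕ)/2 < n/2) := by simp only [hb]; omega
      have hca' : ((a:ℕ)/2 = (j:ℕ)/2 ∧ (a:ℕ)/2 < n/2) := by simp only [ha]; omega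
      have hcb' : ((b:ℕ)/2 = (j:ℕ)/2 ∧ (b:ℕ)/2 < n/2) := by simp only [hb]; omega
      have hamod : (a:ℕ) % 2 = 0 := by simp only [ha]; omega
      have hbmod : ¬((b:ℕ) % 2 = 0) := by simp only [hb]; omega
      simp only [Qf, Matrix.of_apply]
      rw [dif_pos hca, dif_pos hcb, dif_pos hca', dif_pos hcb',
        if_pos hamod, if_pos hamod, if_neg hbmod, if_neg hbmod]
      have hav : ((⟨(a:ℕ)/2, hca.2⟩ : Fin (n/2)) : ℕ) = (i:ℕ)/2 := hca.1
      have hbv : ((⟨(b:ℕ)/2, hcb.2⟩ : Fin (n/2)) : ℕ) = (i:ℕ)/2 := hcb.1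
      have hfa : f y ⟨(a:ℕ)/2, hca.2⟩ = f y ⟨(b:ℕ)/2, hcb.2⟩ := by
        congr 1; exact Fin.ext (by omega)
      rw [hfa]
      set θ := f y ⟨(b:ℕ)/2, hcb.2⟩
      by_cases hi : (i:ℕ) % 2 = 0 <;> by_cases hj : (j:ℕ) % 2 = 0 <;>
        simp only [hi, hj, if_true, if_false, if_pos, if_neg, not_false_iff]
      · have : i = j := Fin.ext (by omega)
        rw [this, Matrix.one_apply_eq]
        rw [← Real.sin_sq_add_cos_sq θ]; ring
      · rw [Matrix.one_apply_ne (by simp only [Fin.ext_iff, ne_eq]; omega)]; ring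
      · rw [Matrix.one_apply_ne (by simp only [Fin.ext_iff, ne_eq]; omega)]; ring
      · have : i = j := Fin.ext (by omega)
        rw [this, Matrix.one_apply_eq]
        rw [← Real.sin_sq_add_cos_sq θ]; ring
    · have hij' : i = j := Fin.ext (by have := i.isLt; have := j.isLt; omega)
      subst hij'
      rw [Finset.sum_eq_single i (fun m _ hm => by
        by_cases hm2 : (m:ℕ)/2 = (i:ℕ)/2
        · simp only [Qf, Matrix.of_apply]
          rw [dif_neg (by rw [hm2]; exact fun hc => hk hc.2), if_neg hm, zero_mul]
        · rw [aux_Q_zero f y hm2, zero_mul]) (by simp)]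
      simp only [Qf, Matrix.of_apply]
      rw [dif_neg (fun hc => hk hc.2)]
      simp [Matrix.one_apply]
  · rw [Matrix.one_apply_ne (by simp only [Fin.ext_iff, ne_eq]; omega)]
    apply Finset.sum_eq_zero
    intro m _
    by_cases hm : (m:ℕ)/2 = (i:ℕ)/2
    · rw [aux_Q_zero f y (m := j) (by omega), mul_zero]
    · rw [aux_Q_zero f y hm, zero_mul]

lemma aux_Qf_zero_eq_one {n : ℕ} (f : (Fin ((n+1)/2) → ℝ) → Fin (n/2) → ℝ)
    (hf0 : ∀ y k, f y k = 0) (y : Fin ((n+1)/2) → ℝ) : Qf f y = 1 := by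
  ext i j
  simp only [Qf, Matrix.of_apply]
  by_cases h : (i:ℕ)/2 = (j:ℕ)/2 ∧ (i:ℕ)/2 < n/2
  · rw [dif_pos h, hf0]
    by_cases hi : (i:ℕ) % 2 = 0 <;> by_cases hj : (j:ℕ) % 2 = 0 <;>
      simp only [hi, hj, if_true, if_false, if_pos, if_neg, not_false_iff,
        Real.cos_zero, Real.sin_zero, neg_zero]
    · rw [show i = j from Fin.ext (by omega), Matrix.one_apply_eq]
    · rw [Matrix.one_apply_ne (by simp only [Fin.ext_iff, ne_eq]; omega)]
    · rw [Matrix.one_apply_ne (by simp only [Fin.ext_iff, ne_eq]; omega)]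
    · rw [show i = j from Fin.ext (by omega), Matrix.one_apply_eq]
  · rw [dif_neg h, Matrix.one_apply]
lemma aux_detQ {n : ℕ} (f : (Fin ((n+1)/2) → ℝ) → Fin (n/2) → ℝ)
    (y : Fin ((n+1)/2) → ℝ) : (Qf f y).det = 1 := by
  set g : ℝ → ℝ := fun t => (Qf (fun z i => t * f z i) y).det with hg
  have hsq : ∀ t, g t ^ 2 = 1 := by
    intro t
    have := congrArg Matrix.det (aux_QtQ (fun z i => t * f z i) y)
    rw [Matrix.det_mul, Matrix.det_transpose, Matrix.det_one] at this
    rw [hg]; rw [sq]; exact this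
  have hg0 : g 0 = 1 := by
    show (Qf (fun z i => (0:ℝ) * f z i) y).det = 1
    rw [aux_Qf_zero_eq_one _ (fun _ _ => zero_mul _), Matrix.det_one]
  have hg1 : g 1 = (Qf f y).det := by
    have hof : (fun z i => (1:ℝ) * f z i) = f := by funext z i; rw [one_mul]
    show (Qf (fun z i => (1:ℝ) * f z i) y).det = _
    rw [hof]
  have hcont : Continuous g := by
    rw [hg]
    refine Continuous.matrix_det (continuous_matrix fun i j => ?_)
    simp only [Qf, Matrix.of_apply]
    by_cases h : (i:ℕ)/2 = (j:ℕ)/2 ∧ (i:ℕ)/2 < n/2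
    · simp only [dif_pos h]
      by_cases hi : (i:ℕ) % 2 = 0 <;> by_cases hj : (j:ℕ) % 2 = 0 <;>
        simp only [hi, hj, if_true, if_false, if_pos, if_neg, not_false_iff] <;>
        fun_prop
    · simp only [dif_neg h]
      exact continuous_const
  have hfac : (g 1 - 1) * (g 1 + 1) = 0 := by have := hsq 1; nlinarith
  rcases mul_eq_zero.mp hfac with h1 | h1
  · rw [← hg1]; linarith
  · have hneg : g 1 = -1 := by linarith
    obtain ⟨t, -, ht⟩ := intermediate_value_Icc' (by norm_num : (0:ℝ) ≤ 1)
      hcont.continuousOn (by rw [hg0, hneg]; norm_num : (0:ℝ) ∈ Set.Icc (g 1) (g 0))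
    have := hsq t
    rw [ht] at this
    norm_num at this

end

end Aux

/-- Remark 3.9: every whirl map is incompressible, `det ∇u = 1`;
more precisely `det ∇u = det[I + Σ_ℓ Qᵗ∂_ℓQ x ⊗ ∇y_ℓ]`, and for any families of vectors
`p_ℓ, q_k` with `⟨p_ℓ, q_k⟩ = 0` one has `det[I + Σ_ℓ p_ℓ ⊗ q_ℓ] = 1`. -/
theorem stmt8 (n : ℕ) (hn : 2 ≤ n)
    (f : (Fin ((n+1)/2) → ℝ) → Fin (n/2) → ℝ)
    (hf : ∀ i, ContDiff ℝ 1 fun y => f y i)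
    (u : (Fin n → ℝ) → Fin n → ℝ)
    (hu : ∀ z, u z = Qf f (yv z) *ᵥ z)
    (x : Fin n → ℝ)
    (hx : ∀ ℓ : Fin ((n+1)/2), 2*(ℓ:ℕ)+1 < n → 0 < yvar x ℓ) :
    let Q := Qf f
    let y0 := yv x
    ((gradm u x).det = 1) ∧
    ((gradm u x).det
      = (1 + ∑ ℓ, vecMulVec (((Q y0)ᵀ * pdM Q y0 ℓ) *ᵥ x)
          (gradx (fun z => yvar z ℓ) x)).det) ∧
    (∀ p q : Fin ((n+1)/2) → Fin n → ℝ,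
      (∀ ℓ k, p ℓ ⬝ᵥ q k = 0) →
      (1 + ∑ ℓ, vecMulVec (p ℓ) (q ℓ)).det = 1) := by
  intro Q y0
  have hfd : ∀ k, Differentiable ℝ (fun y => f y k) := fun k => (hf k).differentiable one_ne_zero
  have hgx : ∀ ℓ : Fin ((n+1)/2), gradx (fun z => yvar z ℓ) x = fun j => dyv x ℓ j := by
    intro ℓ; funext j
    obtain ⟨L, hL, hLv⟩ := aux_yvar_hasFDerivAt x ℓ (hx ℓ)
    show pdx (fun z => yvar z ℓ) x j = _
    rw [pdx, hL.fderiv]; exact hLv j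
  have hE : ∀ (y : Fin ((n+1)/2) → ℝ) (i m : Fin n),
      DifferentiableAt ℝ (fun w => Qf f w i m) y := fun y i m => aux_Q_diff f hfd y i m
  have hcd : ∀ (m : Fin n), DifferentiableAt ℝ (fun z : Fin n → ℝ => z m) x := by
    intro m
    have h1 : HasFDerivAt (fun z : Fin n → ℝ => z m)
        (ContinuousLinearMap.proj m : (Fin n → ℝ) →L[ℝ] ℝ) x := by
      exact (ContinuousLinearMap.proj m : (Fin n → ℝ) →L[ℝ] ℝ).hasFDerivAt (x := x)
    exact h1.differentiableAt
  have hchain := fun i m => aux_chain x hx (fun w => Qf f w i m) (hE (yv x) i m)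
  -- the gradient matrix formula
  have hGrad : gradm u x = Qf f (yv x)
      + ∑ ℓ, vecMulVec (pdM (Qf f) (yv x) ℓ *ᵥ x) (fun j => dyv x ℓ j) := by
    ext i j
    have hui : ∀ z, u z i = ∑ m, Qf f (yv z) i m * z m := by
      intro z; rw [hu z]; simp [Matrix.mulVec, dotProduct]
    have hdm : ∀ m, DifferentiableAt ℝ (fun z => Qf f (yv z) i m * z m) x :=
      fun m => ((hchain i m).1).mul (hcd m)
    have step1 : gradm u x i j = ∑ m, pdx (fun z => Qf f (yv z) i m * z m) x j := by
      show pdx (fun z => u z i) x j = _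
      rw [aux_pdx_congr hui x j]
      exact aux_pdx_sum (fun m z => Qf f (yv z) i m * z m) x hdm j
    have step2 : ∀ m : Fin n, pdx (fun z => Qf f (yv z) i m * z m) x j
        = (∑ ℓ, pdM (Qf f) (yv x) ℓ i m * dyv x ℓ j) * x m
          + Qf f (yv x) i m * (if m = j then 1 else 0) := by
      intro m
      rw [aux_pdx_mul _ _ x (hchain i m).1 (hcd m) j, (hchain i m).2 j, aux_pdx_coord]
      rfl
    rw [step1, Finset.sum_congr rfl (fun m _ => step2 m), Finset.sum_add_distrib]
    have hδ : ∑ m, Qf f (yv x) i m * (if m = j then 1 else 0) = Qf f (yv x) i j := by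
      simp [mul_ite, mul_one, mul_zero]
    have hswap : ∑ m, (∑ ℓ, pdM (Qf f) (yv x) ℓ i m * dyv x ℓ j) * x m
        = ∑ ℓ, (∑ m, pdM (Qf f) (yv x) ℓ i m * x m) * dyv x ℓ j := by
      simp only [Finset.sum_mul]
      rw [Finset.sum_comm]
      refine Finset.sum_congr rfl fun ℓ _ => Finset.sum_congr rfl fun m _ => by ring
    rw [hδ, hswap]
    simp only [Matrix.add_apply, Matrix.sum_apply, vecMulVec_apply, Matrix.mulVec,
      dotProduct]
    ring
  have hQtQ := aux_QtQ f (yv x)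
  have hQQt : Qf f (yv x) * (Qf f (yv x))ᵀ = 1 := mul_eq_one_comm.mp hQtQ
  have hpdM0 : ∀ (ℓ : Fin ((n+1)/2)) (i m : Fin n),
      ¬((i:ℕ)/2 = (m:ℕ)/2 ∧ (i:ℕ)/2 < n/2) → pdM (Qf f) (yv x) ℓ i m = 0 := by
    intro ℓ i m h
    show pdx (fun w => Qf f w i m) (yv x) ℓ = 0
    rw [aux_pdx_congr (fun w => aux_Q_offblock f w h) (yv x) ℓ]
    exact aux_pdx_const _ _ _
  have hanti : ∀ (ℓ : Fin ((n+1)/2)) (i j : Fin n),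
      (∑ m, (pdM (Qf f) (yv x) ℓ m i * Qf f (yv x) m j
        + Qf f (yv x) m i * pdM (Qf f) (yv x) ℓ m j)) = 0 := by
    intro ℓ i j
    have hFc : ∀ w : Fin ((n+1)/2) → ℝ,
        (∑ m, Qf f w m i * Qf f w m j) = (1 : Matrix (Fin n) (Fin n) ℝ) i j := by
      intro w
      have h1 := congrFun (congrFun (aux_QtQ f w) i) j
      rw [← h1, Matrix.mul_apply]
      simp [Matrix.transpose_apply]
    have h0 : pdx (fun w => ∑ m, Qf f w m i * Qf f w m j) (yv x) ℓ = 0 := by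
      rw [aux_pdx_congr hFc (yv x) ℓ]
      exact aux_pdx_const _ _ _
    have h2 : pdx (fun w => ∑ m, Qf f w m i * Qf f w m j) (yv x) ℓ
        = ∑ m, (pdM (Qf f) (yv x) ℓ m i * Qf f (yv x) m j
            + Qf f (yv x) m i * pdM (Qf f) (yv x) ℓ m j) := by
      rw [aux_pdx_sum (fun m w => Qf f w m i * Qf f w m j) (yv x)
        (fun m => (hE _ m i).mul (hE _ m j)) ℓ]
      refine Finset.sum_congr rfl fun m _ => ?_
      rw [aux_pdx_mul _ _ _ (hE _ m i) (hE _ m j)]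
      rfl
    rw [← h2, h0]
  -- block structure and antisymmetry of A = Qᵀ ∂Q
  have hAblock : ∀ (ℓ : Fin ((n+1)/2)) (j m : Fin n),
      ((j:ℕ)/2 ≠ (m:ℕ)/2 ∨ ¬((j:ℕ)/2 < n/2)) →
      ((Qf f (yv x))ᵀ * pdM (Qf f) (yv x) ℓ) j m = 0 := by
    intro ℓ j m h
    rw [Matrix.mul_apply]
    apply Finset.sum_eq_zero
    intro r _
    simp only [Matrix.transpose_apply]
    by_cases hr : (r:ℕ)/2 = (j:ℕ)/2
    · rcases h with h | h
      · rw [hpdM0 ℓ r m (fun hc => h (by omega)), mul_zero]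
      · rw [hpdM0 ℓ r m (fun hc => h (by omega)), mul_zero]
    · rw [aux_Q_zero f (yv x) hr, zero_mul]
  have hAanti : ∀ (ℓ : Fin ((n+1)/2)) (j m : Fin n),
      ((Qf f (yv x))ᵀ * pdM (Qf f) (yv x) ℓ) j m
        + ((Qf f (yv x))ᵀ * pdM (Qf f) (yv x) ℓ) m j = 0 := by
    intro ℓ j m
    have h1 := hanti ℓ j m
    rw [Matrix.mul_apply, Matrix.mul_apply]
    simp only [Matrix.transpose_apply]
    rw [← Finset.sum_add_distrib]
    rw [← h1]
    refine Finset.sum_congr rfl fun r _ => by ring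
  -- orthogonality
  have horth : ∀ ℓ k : Fin ((n+1)/2),
      ((((Qf f (yv x))ᵀ * pdM (Qf f) (yv x) ℓ) *ᵥ x) ⬝ᵥ fun j => dyv x k j) = 0 := by
    intro ℓ k
    set A := (Qf f (yv x))ᵀ * pdM (Qf f) (yv x) ℓ with hA
    have hAb : ∀ (j m : Fin n), ((j:ℕ)/2 ≠ (m:ℕ)/2 ∨ ¬((j:ℕ)/2 < n/2)) → A j m = 0 :=
      fun j m h => by rw [hA]; exact hAblock ℓ j m h
    have hAa : ∀ (j m : Fin n), A j m + A m j = 0 :=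
      fun j m => by rw [hA]; exact hAanti ℓ j m
    show ∑ j, (A *ᵥ x) j * dyv x k j = 0
    by_cases hk : 2*(k:ℕ)+1 < n
    · set a : Fin n := ⟨2*(k:ℕ), by omega⟩ with ha
      set b : Fin n := ⟨2*(k:ℕ)+1, hk⟩ with hb
      have hab : a ≠ b := fun hc => by
        have := congrArg Fin.val hc; simp only [ha, hb] at this; omega
      have hdva : dyv x k a = x a / yvar x k := by
        rw [dyv, if_pos hk, if_pos (by simp only [ha]; omega)]
      have hdvb : dyv x k b = x b / yvar x k := by
        rw [dyv, if_pos hk, if_pos (by simp only [hb]; omega)]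
      rw [aux_sum_two _ a b hab (fun j hja hjb => by
        have hj2 : (j:ℕ)/2 ≠ (k:ℕ) := by
          have h1 : (j:ℕ) ≠ 2*(k:ℕ) := fun hc => hja (Fin.ext hc)
          have h2 : (j:ℕ) ≠ 2*(k:ℕ)+1 := fun hc => hjb (Fin.ext hc)
          omega
        rw [dyv, if_pos hk, if_neg hj2, mul_zero])]
      have hva : (A *ᵥ x) a = A a a * x a + A a b * x b := by
        show ∑ m, A a m * x m = _
        rw [aux_sum_two _ a b hab (fun m hma hmb => by
          have hm2 : (a:ℕ)/2 ≠ (m:ℕ)/2 := by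
            have h1 : (m:ℕ) ≠ 2*(k:ℕ) := fun hc => hma (Fin.ext hc)
            have h2 : (m:ℕ) ≠ 2*(k:ℕ)+1 := fun hc => hmb (Fin.ext hc)
            simp only [ha]; omega
          rw [hAb a m (Or.inl hm2), zero_mul])]
      have hvb : (A *ᵥ x) b = A b a * x a + A b b * x b := by
        show ∑ m, A b m * x m = _
        rw [aux_sum_two _ a b hab (fun m hma hmb => by
          have hm2 : (b:ℕ)/2 ≠ (m:ℕ)/2 := by
            have h1 : (m:ℕ) ≠ 2*(k:ℕ) := fun hc => hma (Fin.ext hc)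
            have h2 : (m:ℕ) ≠ 2*(k:ℕ)+1 := fun hc => hmb (Fin.ext hc)
            simp only [hb]; omega
          rw [hAb b m (Or.inl hm2), zero_mul])]
      have haa : A a a = 0 := by have := hAa a a; linarith
      have hbb : A b b = 0 := by have := hAa b b; linarith
      have habneg : A a b = - A b a := by have := hAa a b; linarith
      rw [hva, hvb, hdva, hdvb, haa, hbb, habneg]
      ring
    · have hc1 : n - 1 < n := by have := k.isLt; omega
      set c : Fin n := ⟨n-1, hc1⟩ with hc
      rw [Finset.sum_eq_single c (fun j _ hj => by
        rw [dyv, if_neg hk, if_neg (fun hc2 => hj (Fin.ext hc2)), mul_zero])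
        (by simp)]
      have hdvc : dyv x k c = 1 := by
        rw [dyv, if_neg hk, if_pos rfl]
      have hvc : (A *ᵥ x) c = 0 := by
        show ∑ m, A c m * x m = 0
        apply Finset.sum_eq_zero
        intro m _
        rw [hAb c m (Or.inr (by
          simp only [hc, Fin.val_mk]
          have := k.isLt
          omega)), zero_mul]
      rw [hvc, hdvc, zero_mul]
  -- general rank-perturbation determinant lemma (part 3)
  have part3 : ∀ p q : Fin ((n+1)/2) → Fin n → ℝ, (∀ ℓ k, p ℓ ⬝ᵥ q k = 0) →
      (1 + ∑ ℓ, vecMulVec (p ℓ) (q ℓ)).det = 1 := by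
    intro p q hpq
    apply aux_det_one_add_sq_zero
    rw [Finset.sum_mul_sum]
    refine Finset.sum_eq_zero fun ℓ _ => Finset.sum_eq_zero fun k _ => ?_
    ext i j
    rw [Matrix.mul_apply]
    simp only [vecMulVec_apply, Matrix.zero_apply]
    have hterm : ∀ m : Fin n, p ℓ i * q ℓ m * (p k m * q k j)
        = (p ℓ i * q k j) * (p k m * q ℓ m) := fun m => by ring
    rw [Finset.sum_congr rfl (fun m _ => hterm m), ← Finset.mul_sum]
    have h0 : ∑ m, p k m * q ℓ m = 0 := hpq k ℓ
    rw [h0, mul_zero]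
  -- factorization and part 2
  have hfac : Qf f (yv x) * (1 + ∑ ℓ, vecMulVec
        ((((Qf f (yv x))ᵀ * pdM (Qf f) (yv x) ℓ) *ᵥ x)) (gradx (fun z => yvar z ℓ) x))
      = gradm u x := by
    rw [mul_add, mul_one, Finset.mul_sum, hGrad]
    congr 1
    refine Finset.sum_congr rfl fun ℓ _ => ?_
    rw [aux_mul_vecMulVec, Matrix.mulVec_mulVec, ← Matrix.mul_assoc, hQQt,
      Matrix.one_mul, hgx ℓ]
  have part2 : (gradm u x).det = (1 + ∑ ℓ, vecMulVec
      ((((Qf f (yv x))ᵀ * pdM (Qf f) (yv x) ℓ) *ᵥ x)) (gradx (fun z => yvar z ℓ) x)).det := by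
    rw [← hfac, Matrix.det_mul, aux_detQ, one_mul]
  have part1 : (gradm u x).det = 1 := by
    rw [part2]
    apply part3
    intro ℓ k
    rw [hgx k]
    exact horth ℓ k
  exact ⟨part1, part2, part3⟩
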